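/- Define, for an integer k ≥ 1, the trend c̄_k = -(1/(2π)^2) · Σ_{m=2}^{∞} (Γ(k+1) · Γ(m) / (Γ(k+m+1) · Γ(2m-1))) · (-1)^m · (2π)^(2m) / ζ(2m-1). Then there exists a constant C > 0 such that |c̄_k + (2π)^2 / (2 ζ(3) k^2)| ≤ C / k^3 for all k ≥ 1; that is, c̄_k = -(2π)^2/(2ζ(3)) · k^(-2) + O(k^(-3)) as k → ∞. -/

import Mathlib

open Finset Real

/-- The trend `c̄_k`, the contribution of the trivial zeros of ζ to the explicit
formula for the Báez-Duarte sequence; the summation index `m` runs over `2, 3, 4, …`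
(here reindexed by `m ↦ m + 2`). -/
noncomputable def baezDuarteTrend (k : ℕ) : ℂ :=
  -(1 / (2 * (Real.pi : ℂ)) ^ 2) * ∑' m : ℕ,
    Complex.Gamma (k + 1) * Complex.Gamma ((m : ℂ) + 2) /
        (Complex.Gamma ((k : ℂ) + (m : ℂ) + 3) * Complex.Gamma (2 * (m : ℂ) + 3)) *
      (-1) ^ m * (2 * (Real.pi : ℂ)) ^ (2 * m + 4) / riemannZeta (2 * (m : ℂ) + 3)

namespace BaezDuarteAux

/-- The `m`-th summand. -/
noncomputable def F (k m : ℕ) : ℂ :=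
  Complex.Gamma (k + 1) * Complex.Gamma ((m : ℂ) + 2) /
      (Complex.Gamma ((k : ℂ) + (m : ℂ) + 3) * Complex.Gamma (2 * (m : ℂ) + 3)) *
    (-1) ^ m * (2 * (Real.pi : ℂ)) ^ (2 * m + 4) / riemannZeta (2 * (m : ℂ) + 3)

lemma baezDuarteTrend_eq (k : ℕ) :
    baezDuarteTrend k = -(1 / (2 * (Real.pi : ℂ)) ^ 2) * ∑' m : ℕ, F k m := rfl

lemma summable_one_div_nat_add_one_pow {p : ℕ} (hp : 2 ≤ p) :
    Summable fun j : ℕ => 1 / ((j : ℝ) + 1) ^ p := by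
  have h := (Real.summable_one_div_nat_pow.mpr hp).comp_injective Nat.succ_injective
  convert h using 2 with j
  case e'_3 => rfl
  simp [Function.comp, Nat.succ_eq_add_one]

lemma one_le_abs_zeta_nat {n : ℕ} (hn : 2 ≤ n) :
    1 ≤ ‖riemannZeta n‖ := by
  have hre : 1 < ((n : ℂ)).re := by
    simp only [Complex.natCast_re]
    exact_mod_cast lt_of_lt_of_le one_lt_two hn
  rw [zeta_eq_tsum_one_div_nat_add_one_cpow hre]
  have hterm : ∀ j : ℕ, (1 : ℂ) / ((j : ℂ) + 1) ^ (n : ℂ)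
      = ((1 / ((j : ℝ) + 1) ^ n : ℝ) : ℂ) := by
    intro j
    rw [Complex.cpow_natCast]
    push_cast
    ring
  rw [tsum_congr hterm, ← Complex.ofReal_tsum, Complex.norm_real, Real.norm_eq_abs]
  have hs : Summable fun j : ℕ => 1 / ((j : ℝ) + 1) ^ n :=
    summable_one_div_nat_add_one_pow hn
  calc (1:ℝ) = 1 / (((0:ℕ) : ℝ) + 1) ^ n := by norm_num
    _ ≤ ∑' j : ℕ, 1 / ((j : ℝ) + 1) ^ n := hs.le_tsum 0 (fun j _ => by positivity)
    _ ≤ |∑' j : ℕ, 1 / ((j : ℝ) + 1) ^ n| := le_abs_self _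

lemma F_eq (k m : ℕ) : F k m =
    ((k.factorial : ℂ) * ((m + 1).factorial : ℂ)) /
        (((k + m + 2).factorial : ℂ) * ((2 * m + 2).factorial : ℂ)) *
      (-1) ^ m * (2 * (Real.pi : ℂ)) ^ (2 * m + 4) /
      riemannZeta ((2 * m + 3 : ℕ) : ℂ) := by
  have h1 : Complex.Gamma ((k : ℂ) + 1) = (k.factorial : ℂ) :=
    Complex.Gamma_nat_eq_factorial k
  have h2 : Complex.Gamma ((m : ℂ) + 2) = ((m + 1).factorial : ℂ) := by
    rw [show ((m : ℂ) + 2) = ((m + 1 : ℕ) : ℂ) + 1 by push_cast; ring,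
      Complex.Gamma_nat_eq_factorial]
  have h3 : Complex.Gamma ((k : ℂ) + (m : ℂ) + 3) = ((k + m + 2).factorial : ℂ) := by
    rw [show ((k : ℂ) + (m : ℂ) + 3) = ((k + m + 2 : ℕ) : ℂ) + 1 by push_cast; ring,
      Complex.Gamma_nat_eq_factorial]
  have h4 : Complex.Gamma (2 * (m : ℂ) + 3) = ((2 * m + 2).factorial : ℂ) := by
    rw [show (2 * (m : ℂ) + 3) = ((2 * m + 2 : ℕ) : ℂ) + 1 by push_cast; ring,
      Complex.Gamma_nat_eq_factorial]
  have h5 : (2 * (m : ℂ) + 3) = ((2 * m + 3 : ℕ) : ℂ) := by push_cast; ring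
  rw [F, h1, h2, h3, h4, h5]

/-- A dominating sequence, independent of `k`. -/
noncomputable def g (m : ℕ) : ℝ :=
  (2 * π) ^ (2 * m + 4) * ((m + 1).factorial : ℝ) / ((2 * m + 2).factorial : ℝ)

lemma g_nonneg (m : ℕ) : 0 ≤ g m := by
  unfold g; positivity

lemma fac_sq_le (m : ℕ) : ((m + 1).factorial : ℝ) * ((m + 1).factorial : ℝ)
    ≤ ((2 * m + 2).factorial : ℝ) := by
  have h2 : (m + 1).factorial * (m + 1).factorial ≤ (2 * m + 2).factorial := by
    have h := Nat.le_of_dvd (Nat.factorial_pos (m + 1 + (m + 1)))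
      (Nat.factorial_mul_factorial_dvd_factorial_add (m + 1) (m + 1))
    have e : m + 1 + (m + 1) = 2 * m + 2 := by ring
    rwa [e] at h
  exact_mod_cast h2

lemma summable_g : Summable g := by
  have key : ∀ m : ℕ, g m ≤ (2 * π) ^ 2 * (((2 * π) ^ 2) ^ (m + 1) / ((m + 1).factorial : ℝ)) := by
    intro m
    have hpow : (2 * π) ^ (2 * m + 4) = (2 * π) ^ 2 * ((2 * π) ^ 2) ^ (m + 1) := by
      rw [← pow_mul, ← pow_add]; ring_nf
    have hg : g m = (2 * π) ^ 2 * (((2 * π) ^ 2) ^ (m + 1) * ((m + 1).factorial : ℝ)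
        / ((2 * m + 2).factorial : ℝ)) := by
      unfold g; rw [hpow]; ring
    rw [hg]
    gcongr (2 * π) ^ 2 * ?_
    rw [div_le_div_iff₀ (by positivity) (by positivity)]
    calc ((2 * π) ^ 2) ^ (m + 1) * ((m + 1).factorial : ℝ) * ((m + 1).factorial : ℝ)
        = ((2 * π) ^ 2) ^ (m + 1) * (((m + 1).factorial : ℝ) * ((m + 1).factorial : ℝ)) := by ring
      _ ≤ ((2 * π) ^ 2) ^ (m + 1) * ((2 * m + 2).factorial : ℝ) := by
          gcongr
          exact fac_sq_le m
  have hsum : Summable fun m : ℕ =>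
      (2 * π) ^ 2 * (((2 * π) ^ 2) ^ (m + 1) / ((m + 1).factorial : ℝ)) := by
    have h := (Real.summable_pow_div_factorial ((2 * π) ^ 2)).comp_injective Nat.succ_injective
    exact h.mul_left _
  exact Summable.of_nonneg_of_le g_nonneg key hsum

lemma abs_F_le (k m : ℕ) :
    ‖F k m‖ ≤ ((k.factorial : ℝ) / ((k + m + 2).factorial : ℝ)) * g m := by
  have hz : 1 ≤ ‖riemannZeta ((2 * m + 3 : ℕ) : ℂ)‖ :=
    one_le_abs_zeta_nat (by omega)
  have habs : ‖F k m‖ =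
      ((k.factorial : ℝ) * ((m + 1).factorial : ℝ) /
        (((k + m + 2).factorial : ℝ) * ((2 * m + 2).factorial : ℝ)) * (2 * π) ^ (2 * m + 4)) /
      ‖riemannZeta ((2 * m + 3 : ℕ) : ℂ)‖ := by
    rw [F_eq]
    simp [norm_div, norm_mul, norm_pow, Complex.norm_natCast, Complex.norm_real,
      abs_of_pos Real.pi_pos]
  rw [habs]
  calc _ ≤ (k.factorial : ℝ) * ((m + 1).factorial : ℝ) /
        (((k + m + 2).factorial : ℝ) * ((2 * m + 2).factorial : ℝ)) * (2 * π) ^ (2 * m + 4) :=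
      div_le_self (by positivity) hz
    _ = ((k.factorial : ℝ) / ((k + m + 2).factorial : ℝ)) * g m := by
      unfold g
      field_simp

lemma summable_norm_F (k : ℕ) : Summable fun m : ℕ => ‖F k m‖ := by
  refine Summable.of_nonneg_of_le (fun m => norm_nonneg _) (fun m => ?_) summable_g
  calc ‖F k m‖ ≤ ((k.factorial : ℝ) / ((k + m + 2).factorial : ℝ)) * g m :=
      abs_F_le k m
    _ ≤ 1 * g m := by
      gcongr
      · exact g_nonneg m
      · rw [div_le_one (by positivity)]
        exact_mod_cast Nat.factorial_le (by omega)
    _ = g m := one_mul _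

lemma summable_F (k : ℕ) : Summable fun m : ℕ => F k m :=
  (summable_norm_F k).of_norm

lemma F_zero (k : ℕ) : F k 0 =
    (k.factorial : ℂ) / (((k + 2).factorial : ℂ) * 2) * (2 * (Real.pi : ℂ)) ^ 4 /
      riemannZeta 3 := by
  rw [F_eq]
  norm_num [Nat.factorial]

end BaezDuarteAux

open BaezDuarteAux in
/-- `c̄_k = -(2π)²/(2ζ(3)) k⁻² + O(k⁻³)`. -/
theorem baezDuarteTrend_asymptotic :
    ∃ C : ℝ, 0 < C ∧ ∀ k : ℕ, 1 ≤ k →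
      ‖baezDuarteTrend k +
          (2 * (Real.pi : ℂ)) ^ 2 / (2 * riemannZeta 3 * (k : ℂ) ^ 2)‖ ≤
        C / (k : ℝ) ^ 3 := by
  set D : ℝ := ∑' m : ℕ, g (m + 1) with hD_def
  have hD : 0 ≤ D := tsum_nonneg fun m => g_nonneg _
  refine ⟨(2 * π) ^ 2 * 5 / 2 + (1 / (2 * π) ^ 2) * D, ?_, ?_⟩
  · have h1 : (0:ℝ) < (2 * π) ^ 2 * 5 / 2 := by positivity
    have h2 : (0:ℝ) ≤ (1 / (2 * π) ^ 2) * D := by positivity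
    linarith
  intro k hk
  have hkR : (1:ℝ) ≤ (k : ℝ) := by exact_mod_cast hk
  have hkR0 : (0:ℝ) < (k : ℝ) := by linarith
  have hkC : (k : ℂ) ≠ 0 := by
    exact_mod_cast Nat.cast_ne_zero.mpr (by omega)
  have hz3 : riemannZeta 3 ≠ 0 := by
    refine riemannZeta_ne_zero_of_one_lt_re ?_
    norm_num
  have hz3abs : 1 ≤ ‖riemannZeta 3‖ := by
    have h := one_le_abs_zeta_nat (n := 3) (by norm_num)
    simpa using h
  -- the main-term discrepancy
  set r : ℝ := (2 * π) ^ 2 / 2 *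
    (1 / (k : ℝ) ^ 2 - (k.factorial : ℝ) / ((k + 2).factorial : ℝ)) with hr_def
  have hfac2 : ((k + 2).factorial : ℝ) = ((k:ℝ) + 2) * (((k:ℝ) + 1) * (k.factorial : ℝ)) := by
    rw [show k + 2 = (k + 1) + 1 from rfl, Nat.factorial_succ, Nat.factorial_succ]
    push_cast
    ring
  have hfac2' : (k.factorial : ℝ) / ((k + 2).factorial : ℝ)
      = 1 / (((k:ℝ) + 1) * ((k:ℝ) + 2)) := by
    rw [hfac2]
    have : (k.factorial : ℝ) ≠ 0 := by positivity
    field_simp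
  have hle2 : 1 / (((k:ℝ) + 1) * ((k:ℝ) + 2)) ≤ 1 / (k : ℝ) ^ 2 := by
    apply one_div_le_one_div_of_le (by positivity)
    nlinarith
  have hr0 : 0 ≤ r := by
    rw [hr_def, hfac2']
    exact mul_nonneg (by positivity) (by linarith)
  have hr5 : r ≤ ((2 * π) ^ 2 * 5 / 2) / (k : ℝ) ^ 3 := by
    rw [hr_def, hfac2']
    have hinner : 1 / (k : ℝ) ^ 2 - 1 / (((k:ℝ) + 1) * ((k:ℝ) + 2)) ≤ 5 / (k : ℝ) ^ 3 := by
      rw [div_sub_div _ _ (by positivity) (by positivity),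
        div_le_div_iff₀ (by positivity) (by positivity)]
      nlinarith
    calc (2 * π) ^ 2 / 2 * (1 / (k : ℝ) ^ 2 - 1 / (((k:ℝ) + 1) * ((k:ℝ) + 2)))
        ≤ (2 * π) ^ 2 / 2 * (5 / (k : ℝ) ^ 3) :=
          mul_le_mul_of_nonneg_left hinner (by positivity)
      _ = ((2 * π) ^ 2 * 5 / 2) / (k : ℝ) ^ 3 := by ring
  -- tail bound
  have hfr : ∀ m : ℕ, (k.factorial : ℝ) / ((k + (m + 1) + 2).factorial : ℝ)
      ≤ 1 / (k : ℝ) ^ 3 := by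
    intro m
    have hnat : k.factorial * k ^ 3 ≤ (k + (m + 1) + 2).factorial := by
      have h1 : k ^ 3 ≤ (k + 1) * ((k + 2) * (k + 3)) := by nlinarith
      have h2 : k.factorial * ((k + 1) * ((k + 2) * (k + 3))) = (k + 3).factorial := by
        rw [show k + 3 = ((k + 1) + 1) + 1 from rfl]
        rw [Nat.factorial_succ, Nat.factorial_succ, Nat.factorial_succ]
        ring
      calc k.factorial * k ^ 3 ≤ k.factorial * ((k + 1) * ((k + 2) * (k + 3))) := by
            exact Nat.mul_le_mul_left _ h1
        _ = (k + 3).factorial := h2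
        _ ≤ (k + (m + 1) + 2).factorial := Nat.factorial_le (by omega)
    rw [div_le_div_iff₀ (by positivity) (by positivity)]
    rw [one_mul]
    exact_mod_cast hnat
  have hshift_sum : Summable fun m : ℕ => g (m + 1) :=
    summable_g.comp_injective Nat.succ_injective
  have hTail : ‖∑' m : ℕ, F k (m + 1)‖ ≤ (1 / (k : ℝ) ^ 3) * D := by
    have hnorm_shift : Summable fun m : ℕ => ‖F k (m + 1)‖ :=
      (summable_norm_F k).comp_injective Nat.succ_injective
    calc ‖∑' m : ℕ, F k (m + 1)‖ = ‖∑' m : ℕ, F k (m + 1)‖ := rfl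
      _ ≤ ∑' m : ℕ, ‖F k (m + 1)‖ := norm_tsum_le_tsum_norm hnorm_shift
      _ ≤ ∑' m : ℕ, (1 / (k : ℝ) ^ 3) * g (m + 1) := by
          refine Summable.tsum_le_tsum (fun m => ?_) hnorm_shift (hshift_sum.mul_left _)
          calc ‖F k (m + 1)‖
              ≤ ((k.factorial : ℝ) / ((k + (m + 1) + 2).factorial : ℝ)) * g (m + 1) :=
                abs_F_le k (m + 1)
            _ ≤ (1 / (k : ℝ) ^ 3) * g (m + 1) :=
                mul_le_mul_of_nonneg_right (hfr m) (g_nonneg _)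
      _ = (1 / (k : ℝ) ^ 3) * D := tsum_mul_left
  -- split the sum
  have hBD : baezDuarteTrend k = -(1 / (2 * (Real.pi : ℂ)) ^ 2) * F k 0 +
      -(1 / (2 * (Real.pi : ℂ)) ^ 2) * ∑' m : ℕ, F k (m + 1) := by
    rw [baezDuarteTrend_eq, Summable.tsum_eq_zero_add (summable_F k), mul_add]
  have hπC : (Real.pi : ℂ) ≠ 0 := by
    exact_mod_cast Real.pi_ne_zero
  have hfacC : ((k + 2).factorial : ℂ) ≠ 0 :=
    Nat.cast_ne_zero.mpr (Nat.factorial_pos _).ne'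
  have hkey : -(1 / (2 * (Real.pi : ℂ)) ^ 2) *
      ((k.factorial : ℂ) / (((k + 2).factorial : ℂ) * 2) * (2 * (Real.pi : ℂ)) ^ 4) +
      (2 * (Real.pi : ℂ)) ^ 2 / (2 * (k : ℂ) ^ 2) = (r : ℂ) := by
    have hr' : (r : ℂ) = (2 * (Real.pi : ℂ)) ^ 2 / 2 *
        (1 / (k : ℂ) ^ 2 - (k.factorial : ℂ) / ((k + 2).factorial : ℂ)) := by
      rw [hr_def]; push_cast; ring
    rw [hr']
    linear_combination (-2 * (Real.pi : ℂ) ^ 2 * (k.factorial : ℂ) *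
      ((k + 2).factorial : ℂ)⁻¹ * ((Real.pi : ℂ) * (Real.pi : ℂ)⁻¹ + 1)) *
      mul_inv_cancel₀ hπC
  have hE1 : -(1 / (2 * (Real.pi : ℂ)) ^ 2) * F k 0 +
      (2 * (Real.pi : ℂ)) ^ 2 / (2 * riemannZeta 3 * (k : ℂ) ^ 2) =
      (r : ℂ) / riemannZeta 3 := by
    rw [F_zero]
    linear_combination (riemannZeta 3)⁻¹ * hkey
  have hsplit : baezDuarteTrend k +
      (2 * (Real.pi : ℂ)) ^ 2 / (2 * riemannZeta 3 * (k : ℂ) ^ 2) =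
      (r : ℂ) / riemannZeta 3 +
        -(1 / (2 * (Real.pi : ℂ)) ^ 2) * ∑' m : ℕ, F k (m + 1) := by
    rw [hBD]
    linear_combination hE1
  rw [hsplit]
  have hA : ‖-(1 / (2 * (Real.pi : ℂ)) ^ 2)‖ = 1 / (2 * π) ^ 2 := by
    simp [norm_div, norm_mul, norm_pow, Complex.norm_real, abs_of_pos Real.pi_pos]
  calc ‖(r : ℂ) / riemannZeta 3 +
        -(1 / (2 * (Real.pi : ℂ)) ^ 2) * ∑' m : ℕ, F k (m + 1)‖
      ≤ ‖(r : ℂ) / riemannZeta 3‖ +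
        ‖-(1 / (2 * (Real.pi : ℂ)) ^ 2) * ∑' m : ℕ, F k (m + 1)‖ :=
      norm_add_le _ _
    _ ≤ r + (1 / (2 * π) ^ 2) * ((1 / (k : ℝ) ^ 3) * D) := by
      refine add_le_add ?_ ?_
      · rw [norm_div, Complex.norm_real, Real.norm_eq_abs, abs_of_nonneg hr0]
        exact div_le_self hr0 hz3abs
      · rw [norm_mul, hA]
        exact mul_le_mul_of_nonneg_left hTail (by positivity)
    _ ≤ ((2 * π) ^ 2 * 5 / 2) / (k : ℝ) ^ 3 + ((1 / (2 * π) ^ 2) * D) / (k : ℝ) ^ 3 :=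
      add_le_add hr5 (le_of_eq (by ring))
    _ = ((2 * π) ^ 2 * 5 / 2 + (1 / (2 * π) ^ 2) * D) / (k : ℝ) ^ 3 := by
      rw [add_div]
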